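/- Let λ ∈ 𝒫^l_n, c ≥ 0, 1 ≤ m ≤ l and n_L = |λ_L(c,m)|. If t ∈ Std(λ) and the entries 1,…,n_L all appear in t in column c of component m or further to the left, then t = t_L # t_R for some t_L ∈ Std(λ_L(c,m)) and t_R ∈ Std(λ_R(c,m)). -/

import Mathlib

namespace FS

open scoped Classical

/-- A node `(r, c, m)`: row `r`, column `c`, component `m` (all 1-based). -/
abbrev Node := ℕ × ℕ × ℕ

/-- Membership of a node in the Young diagram of the multipartition `p`,
where `p m r` is the `r`-th part of the `m`-th component. -/
def InDiag (p : ℕ → ℕ → ℕ) (A : Node) : Prop :=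
  1 ≤ A.2.1 ∧ A.2.1 ≤ p A.2.2 A.1

/-- `p` is an `l`-multipartition of `n` (components indexed `1,…,l`, rows indexed `1,…`). -/
def IsMP (l n : ℕ) (p : ℕ → ℕ → ℕ) : Prop :=
  (∀ m r, (m = 0 ∨ l < m ∨ r = 0 ∨ n < r) → p m r = 0) ∧
  (∀ m r, 1 ≤ r → p m (r + 1) ≤ p m r) ∧
  (∑ m ∈ Finset.Icc 1 l, ∑ r ∈ Finset.Icc 1 n, p m r) = n

/-- Total size of an `l`-multicomposition (rows bounded by `n`). -/
def mpSize (l n : ℕ) (p : ℕ → ℕ → ℕ) : ℕ :=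
  ∑ m ∈ Finset.Icc 1 l, ∑ r ∈ Finset.Icc 1 n, p m r

/-- Size of the `m`-th component. -/
def compSize (n : ℕ) (p : ℕ → ℕ → ℕ) (m : ℕ) : ℕ :=
  ∑ r ∈ Finset.Icc 1 n, p m r

/-- Length of column `c` of component `m`, i.e. `(p^(m))'_c`. -/
def colLen (n : ℕ) (p : ℕ → ℕ → ℕ) (m c : ℕ) : ℕ :=
  ((Finset.Icc 1 n).filter fun r => c ≤ p m r).card

/-- Dominance order on `l`-multicompositions: `Dom l N p q` means `p ⊵ q`. -/
def Dom (l N : ℕ) (p q : ℕ → ℕ → ℕ) : Prop :=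
  ∀ m r, 1 ≤ m → m ≤ l →
    (∑ m' ∈ Finset.Icc 1 (m - 1), compSize N q m') + ∑ r' ∈ Finset.Icc 1 r, q m r' ≤
      (∑ m' ∈ Finset.Icc 1 (m - 1), compSize N p m') + ∑ r' ∈ Finset.Icc 1 r, p m r'

/-- `t` is a `p`-tableau: a bijection from the diagram of `p` onto `{1,…,n}`. -/
def IsTab (n : ℕ) (p : ℕ → ℕ → ℕ) (t : Node → ℕ) : Prop :=
  (∀ A, InDiag p A → 1 ≤ t A ∧ t A ≤ n) ∧
  (∀ A B, InDiag p A → InDiag p B → t A = t B → A = B) ∧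
  (∀ i, 1 ≤ i → i ≤ n → ∃ A, InDiag p A ∧ t A = i)

/-- Entries increase from left to right along each row. -/
def RowStrict (p : ℕ → ℕ → ℕ) (t : Node → ℕ) : Prop :=
  ∀ r c m, InDiag p (r, c, m) → InDiag p (r, c + 1, m) → t (r, c, m) < t (r, c + 1, m)

/-- Entries increase down each column. -/
def ColStrict (p : ℕ → ℕ → ℕ) (t : Node → ℕ) : Prop :=
  ∀ r c m, InDiag p (r, c, m) → InDiag p (r + 1, c, m) → t (r, c, m) < t (r + 1, c, m)

/-- A standard tableau is both row-strict and column-strict. -/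
def IsStd (p : ℕ → ℕ → ℕ) (t : Node → ℕ) : Prop := RowStrict p t ∧ ColStrict p t

/-- The tableau `t_λ`, obtained by writing `1,…,n` in order down successive columns
from left to right (components from `l` down to `1`). -/
def colTab (l n : ℕ) (p : ℕ → ℕ → ℕ) : Node → ℕ := fun A =>
  (∑ m' ∈ Finset.Icc (A.2.2 + 1) l, compSize n p m') +
    (∑ c' ∈ Finset.Icc 1 (A.2.1 - 1), colLen n p A.2.2 c') + A.1

/-- The tableau `t^λ`, obtained by writing `1,…,n` in order along successive rows
from top to bottom (components from `1` up to `l`). -/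
def rowTab (n : ℕ) (p : ℕ → ℕ → ℕ) : Node → ℕ := fun A =>
  (∑ m' ∈ Finset.Icc 1 (A.2.2 - 1), compSize n p m') +
    (∑ r' ∈ Finset.Icc 1 (A.1 - 1), p A.2.2 r') + A.2.1

/-- The Coxeter generator `s_i = (i, i+1)` of the symmetric group. -/
def sw (i : ℕ) : Equiv.Perm ℕ := Equiv.swap i (i + 1)

/-- The product `s_{i_1} ⋯ s_{i_k}` corresponding to a word `L = [i_1,…,i_k]`. -/
def wordProd (L : List ℕ) : Equiv.Perm ℕ := (L.map sw).prod

/-- `L` is an expression for `w` in the Coxeter generators `s_1,…,s_{n-1}` of `S_n`. -/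
def IsWord (n : ℕ) (L : List ℕ) (w : Equiv.Perm ℕ) : Prop :=
  (∀ i ∈ L, 1 ≤ i ∧ i + 1 ≤ n) ∧ wordProd L = w

/-- The Coxeter length of `w ∈ S_n`. -/
noncomputable def len (n : ℕ) (w : Equiv.Perm ℕ) : ℕ :=
  sInf {k | ∃ L, IsWord n L w ∧ L.length = k}

/-- `L` is a reduced expression for `w ∈ S_n`. -/
def IsReduced (n : ℕ) (L : List ℕ) (w : Equiv.Perm ℕ) : Prop :=
  IsWord n L w ∧ L.length = len n w

/-- The Bruhat order on `S_n`: `x ≤ w` iff some reduced expression for `w` has an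
expression for `x` as a subsequence. -/
def BruhatLE (n : ℕ) (x w : Equiv.Perm ℕ) : Prop :=
  ∃ L, IsReduced n L w ∧ ∃ L', L'.Sublist L ∧ wordProd L' = x

/-- Strict Bruhat order. -/
def BruhatLT (n : ℕ) (x w : Equiv.Perm ℕ) : Prop := BruhatLE n x w ∧ x ≠ w

/-- The left (weak) order on `S_n`: `x ≤_L w` iff `ℓ(w) = ℓ(w x⁻¹) + ℓ(x)`. -/
def LeftLE (n : ℕ) (x w : Equiv.Perm ℕ) : Prop :=
  len n w = len n (w * x⁻¹) + len n x

/-- `w` is a permutation of `{1,…,n}` (fixing everything else). -/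
def PermOf (n : ℕ) (w : Equiv.Perm ℕ) : Prop := ∀ i, i = 0 ∨ n < i → w i = i

/-- `w` is the permutation sending the base tableau `base` to the tableau `t`
(e.g. `w = w_t` when `base = t_λ`). -/
def IsPermOfTab (n : ℕ) (p : ℕ → ℕ → ℕ) (base t : Node → ℕ) (w : Equiv.Perm ℕ) : Prop :=
  PermOf n w ∧ ∀ A, InDiag p A → w (base A) = t A

/-- `Shape(t↓j)`: the multicomposition whose `(m, r)` entry is the number of nodes in
row `r` of component `m` whose entry under `t` is at most `j`. -/
def shape (n : ℕ) (p : ℕ → ℕ → ℕ) (t : Node → ℕ) (j : ℕ) : ℕ → ℕ → ℕ :=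
  fun m r => ((Finset.Icc 1 n).filter fun c => c ≤ p m r ∧ t (r, c, m) ≤ j).card

/-- `Shape(t↓j)'`: the conjugate multicomposition, whose `(m, c)` entry is the number of
nodes in column `c` of component `l + 1 - m` whose entry under `t` is at most `j`. -/
def shapeConj (l n : ℕ) (p : ℕ → ℕ → ℕ) (t : Node → ℕ) (j : ℕ) : ℕ → ℕ → ℕ :=
  fun m c => ((Finset.Icc 1 n).filter fun r => c ≤ p (l + 1 - m) r ∧ t (r, c, l + 1 - m) ≤ j).card

/-- `A` lies weakly to the left of `B`. -/
def WeaklyLeft (A B : Node) : Prop :=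
  B.2.2 < A.2.2 ∨ (A.2.2 = B.2.2 ∧ A.2.1 ≤ B.2.1)

/-- `A` lies weakly above `B`. -/
def WeaklyAbove (A B : Node) : Prop :=
  A.2.2 < B.2.2 ∨ (A.2.2 = B.2.2 ∧ A.1 ≤ B.1)

/-- `A` lies weakly to the right of `B`. -/
def WeaklyRight (A B : Node) : Prop :=
  A.2.2 < B.2.2 ∨ (A.2.2 = B.2.2 ∧ B.2.1 ≤ A.2.1)

/-- `t` (a `mu`-tableau) is `lam`-column-dominated on `1,…,j`: each `i ≤ j` appears in `t`
at least as far to the left as it does in `t_lam`. -/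
def ColDomOn (l n : ℕ) (lam mu : ℕ → ℕ → ℕ) (t : Node → ℕ) (j : ℕ) : Prop :=
  ∀ i A B, 1 ≤ i → i ≤ j → InDiag mu A → t A = i → InDiag lam B →
    colTab l n lam B = i → WeaklyLeft A B

/-- `t` is weakly `lam`-column-dominated on `1,…,j`: each `i ≤ j` appears in `t` in a
component at least as far to the left as it does in `t_lam`. -/
def WColDomOn (l n : ℕ) (lam mu : ℕ → ℕ → ℕ) (t : Node → ℕ) (j : ℕ) : Prop :=
  ∀ i A B, 1 ≤ i → i ≤ j → InDiag mu A → t A = i → InDiag lam B →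
    colTab l n lam B = i → B.2.2 ≤ A.2.2

/-- `t` (a `mu`-tableau) is `lam`-row-dominated on `1,…,j`: each `i ≤ j` appears in `t`
at least as high as it does in `t^lam`. -/
def RowDomOn (n : ℕ) (lam mu : ℕ → ℕ → ℕ) (t : Node → ℕ) (j : ℕ) : Prop :=
  ∀ i A B, 1 ≤ i → i ≤ j → InDiag mu A → t A = i → InDiag lam B →
    rowTab n lam B = i → WeaklyAbove A B

/-- The multipartition `λ_L(c, m)`: the first `c` columns of component `m`, followed by
components `m+1,…,l`. -/
def leftPart (lam : ℕ → ℕ → ℕ) (c m : ℕ) : ℕ → ℕ → ℕ := fun k r =>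
  if k = 0 then 0 else if k = 1 then min (lam m r) c else lam (m + k - 1) r

/-- The multipartition `λ_R(c, m)`: components `1,…,m-1`, followed by the part of
component `m` after its first `c` columns. -/
def rightPart (lam : ℕ → ℕ → ℕ) (c m : ℕ) : ℕ → ℕ → ℕ := fun k r =>
  if k < m then lam k r else if k = m then lam m r - c else 0

/-- The multipartition `λ_T(r₀, m)`: components `1,…,m-1`, followed by the first `r₀`
rows of component `m`. -/
def topPart (lam : ℕ → ℕ → ℕ) (r₀ m : ℕ) : ℕ → ℕ → ℕ := fun k r =>
  if k < m then lam k r else if k = m then (if r ≤ r₀ then lam m r else 0) else 0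

/-- The multipartition `λ_B(r₀, m)`: the rows of component `m` after row `r₀`, followed
by components `m+1,…,l`. -/
def botPart (lam : ℕ → ℕ → ℕ) (r₀ m : ℕ) : ℕ → ℕ → ℕ := fun k r =>
  if k = 0 ∨ r = 0 then 0 else if k = 1 then lam m (r₀ + r) else lam (m + k - 1) r

/-- The glued tableau `t_L # t_R`: places `1,…,n_L` on the left part as in `t_L`, and
places `n_L + t_R(A)` at the node corresponding to each node `A` of the right part. -/
def glueLR (nL c m : ℕ) (tL tR : Node → ℕ) : Node → ℕ := fun A =>
  if A.2.2 < m then nL + tR A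
  else if A.2.2 = m then
    (if A.2.1 ≤ c then tL (A.1, A.2.1, 1) else nL + tR (A.1, A.2.1 - c, m))
  else tL (A.1, A.2.1, A.2.2 - m + 1)

/-- The tableau `t⁺` obtained from a tableau `t` of `μ_R(1,m)` by increasing all entries
by `k`, adjoining a first column with entries `1,…,k` to component `m`, and adjoining
empty components `m+1,…,l`. -/
def addFirstCol (k m : ℕ) (t : Node → ℕ) : Node → ℕ := fun A =>
  if A.2.2 = m then (if A.2.1 = 1 then A.1 else k + t (A.1, A.2.1 - 1, m))
  else k + t A

/-- The tableau `t⁺` obtained from a tableau `t` of `μ_L(d-1,m)` by adjoining empty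
components `1,…,m-1` and adjoining a column `d` to component `m` with entries
`nk+1,…,nk+k` from top to bottom. -/
def addLastCol (nk m d : ℕ) (t : Node → ℕ) : Node → ℕ := fun A =>
  if A.2.2 = m then (if A.2.1 = d then nk + A.1 else t (A.1, A.2.1, 1))
  else t (A.1, A.2.1, A.2.2 - m + 1)

/-- The `i`-th smallest element of a finite set of naturals (1-based). -/
def nthElt (S : Finset ℕ) (i : ℕ) : ℕ := (S.sort (· ≤ ·)).getD (i - 1) 0

/-- The set `S_B` of entries of `t_λ` lying in the bottom region (component `> m`, or
component `m` in a row `> r₀`). -/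
noncomputable def SB (l n : ℕ) (lam : ℕ → ℕ → ℕ) (r₀ m : ℕ) : Finset ℕ :=
  (Finset.Icc 1 n).filter fun i =>
    ∃ A, InDiag lam A ∧ colTab l n lam A = i ∧ (m < A.2.2 ∨ (A.2.2 = m ∧ r₀ < A.1))

/-- The glued tableau `t #̄ s`: on the bottom region the entries are `lab_B ∘ t` and on
the top region they are `lab_T ∘ s`, where `lab_B`, `lab_T` are the order-preserving
bijections onto `S_B`, `S_T`. -/
def glueBT (S_B S_T : Finset ℕ) (r₀ m : ℕ) (tB tT : Node → ℕ) : Node → ℕ := fun A =>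
  if A.2.2 < m then nthElt S_T (tT A)
  else if A.2.2 = m then
    (if A.1 ≤ r₀ then nthElt S_T (tT A) else nthElt S_B (tB (A.1 - r₀, A.2.1, 1)))
  else nthElt S_B (tB (A.1, A.2.1, A.2.2 - m + 1))

/-- The residue of a node `(r, c, m)` with respect to the multicharge `κ`:
`κ_m + c - r` in `ℤ/eℤ` (with `ZMod 0 = ℤ` encoding `e = ∞`). -/
def resNode (e : ℕ) (κ : ℕ → ZMod e) (A : Node) : ZMod e :=
  κ A.2.2 + (A.2.1 : ZMod e) - (A.1 : ZMod e)


/-! ### Auxiliary lemmas for Statement 19 -/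

/-- Column counts of the left region. -/
def lq (lam : ℕ → ℕ → ℕ) (c m : ℕ) (m' r : ℕ) : ℕ :=
  if m' < m then 0 else if m' = m then min (lam m r) c else lam m' r

lemma card_filter_Icc (n v : ℕ) (hv : v ≤ n) (P : ℕ → Prop) [DecidablePred P]
    (h : ∀ x, 1 ≤ x → x ≤ n → (P x ↔ x ≤ v)) :
    ((Finset.Icc 1 n).filter P).card = v := by
  have he : (Finset.Icc 1 n).filter P = Finset.Icc 1 v := by
    ext x
    simp only [Finset.mem_filter, Finset.mem_Icc]
    constructor
    · rintro ⟨⟨h1, h2⟩, hp⟩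
      exact ⟨h1, (h x h1 h2).1 hp⟩
    · rintro ⟨h1, h2⟩
      exact ⟨⟨h1, by omega⟩, (h x h1 (by omega)).2 h2⟩
  rw [he, Nat.card_Icc]
  omega

lemma card_filter_box (l n : ℕ) (P : Node → Prop) [DecidablePred P] :
    (((Finset.Icc 1 n) ×ˢ (Finset.Icc 1 n) ×ˢ (Finset.Icc 1 l)).filter P).card
      = ∑ m ∈ Finset.Icc 1 l, ∑ r ∈ Finset.Icc 1 n,
          ((Finset.Icc 1 n).filter fun c => P (r, c, m)).card := by
  rw [Finset.card_filter, Finset.sum_product]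
  simp only [Finset.sum_product]
  have h1 : ∀ r ∈ Finset.Icc 1 n,
      (∑ c ∈ Finset.Icc 1 n, ∑ m ∈ Finset.Icc 1 l, if P (r, c, m) then 1 else 0)
        = ∑ m ∈ Finset.Icc 1 l, ∑ c ∈ Finset.Icc 1 n, if P (r, c, m) then 1 else 0 :=
    fun r _ => Finset.sum_comm
  rw [Finset.sum_congr rfl h1, Finset.sum_comm]
  exact Finset.sum_congr rfl fun m _ => Finset.sum_congr rfl fun r _ =>
    (Finset.card_filter _ _).symm

lemma part_le_of_isMP {l n : ℕ} {lam : ℕ → ℕ → ℕ} (h : IsMP l n lam) (m r : ℕ) :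
    lam m r ≤ n := by
  by_cases hm : 1 ≤ m ∧ m ≤ l ∧ 1 ≤ r ∧ r ≤ n
  · calc lam m r ≤ ∑ r' ∈ Finset.Icc 1 n, lam m r' :=
        Finset.single_le_sum (f := fun r' => lam m r') (fun _ _ => Nat.zero_le _)
          (Finset.mem_Icc.mpr ⟨hm.2.2.1, hm.2.2.2⟩)
    _ ≤ ∑ m' ∈ Finset.Icc 1 l, ∑ r' ∈ Finset.Icc 1 n, lam m' r' :=
        Finset.single_le_sum (f := fun m' => ∑ r' ∈ Finset.Icc 1 n, lam m' r')
          (fun _ _ => Nat.zero_le _) (Finset.mem_Icc.mpr ⟨hm.1, hm.2.1⟩)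
    _ = n := h.2.2
  · rw [h.1 m r (by omega)]
    exact Nat.zero_le n

/-- If `t ∈ Std(λ)` and the entries `1,…,n_L` all appear in `t` in
column `c` of component `m` or further to the left, then `t = t_L # t_R` for some
`t_L ∈ Std(λ_L(c,m))` and `t_R ∈ Std(λ_R(c,m))`. -/
theorem std_splits_as_glue (l n : ℕ) (hl : 1 ≤ l) (hn : 1 ≤ n)
    (c m : ℕ) (hm1 : 1 ≤ m) (hm2 : m ≤ l)
    (lam : ℕ → ℕ → ℕ) (hlam : IsMP l n lam)
    (nL : ℕ) (hnL : nL = mpSize (l - m + 1) n (leftPart lam c m))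
    (t : Node → ℕ) (htTab : IsTab n lam t) (htStd : IsStd lam t)
    (hleft : ∀ A, InDiag lam A → t A ≤ nL → (m < A.2.2 ∨ (A.2.2 = m ∧ A.2.1 ≤ c))) :
    ∃ tL tR : Node → ℕ,
      IsTab nL (leftPart lam c m) tL ∧ IsStd (leftPart lam c m) tL ∧
      IsTab (n - nL) (rightPart lam c m) tR ∧ IsStd (rightPart lam c m) tR ∧
      ∀ A, InDiag lam A → t A = glueLR nL c m tL tR A := by
  classical
  -- component versions of the tableau axioms
  have htb' : ∀ r c' M, InDiag lam (r, c', M) → 1 ≤ t (r, c', M) ∧ t (r, c', M) ≤ n :=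
    fun r c' M h => htTab.1 (r, c', M) h
  have htinj' : ∀ r1 c1 M1 r2 c2 M2, InDiag lam (r1, c1, M1) → InDiag lam (r2, c2, M2) →
      t (r1, c1, M1) = t (r2, c2, M2) → ((r1, c1, M1) : Node) = (r2, c2, M2) :=
    fun r1 c1 M1 r2 c2 M2 hA hB h => htTab.2.1 _ _ hA hB h
  set box : Finset Node := (Finset.Icc 1 n) ×ˢ (Finset.Icc 1 n) ×ˢ (Finset.Icc 1 l)
    with hboxdef
  have hmem : ∀ A, InDiag lam A → A ∈ box := by
    rintro ⟨r, c', m'⟩ h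
    have h1 : 1 ≤ c' := h.1
    have h2 : c' ≤ lam m' r := h.2
    have hm' : 1 ≤ m' ∧ m' ≤ l ∧ 1 ≤ r ∧ r ≤ n := by
      by_contra hc
      rw [hlam.1 m' r (by omega)] at h2
      omega
    have hb := part_le_of_isMP hlam m' r
    simp only [hboxdef, Finset.mem_product, Finset.mem_Icc]
    exact ⟨⟨hm'.2.2.1, hm'.2.2.2⟩, ⟨h1, by omega⟩, hm'.1, hm'.2.1⟩
  have hDcard : (box.filter fun A => InDiag lam A).card = n := by
    rw [card_filter_box]
    refine Eq.trans (Finset.sum_congr rfl fun m' _ => Finset.sum_congr rfl fun r _ => ?_)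
      hlam.2.2
    refine card_filter_Icc n (lam m' r) (part_le_of_isMP hlam m' r) _ fun x h1 h2 => ?_
    show (1 ≤ x ∧ x ≤ lam m' r) ↔ x ≤ lam m' r
    omega
  have hDLcard : (box.filter fun A => InDiag lam A ∧
      (m < A.2.2 ∨ (A.2.2 = m ∧ A.2.1 ≤ c))).card = nL := by
    rw [card_filter_box, hnL]
    unfold mpSize
    refine Eq.trans (b := ∑ m' ∈ Finset.Icc 1 l, ∑ r ∈ Finset.Icc 1 n, lq lam c m m' r)
      (Finset.sum_congr rfl fun m' _ => Finset.sum_congr rfl fun r _ => ?_) ?_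
    · refine card_filter_Icc n (lq lam c m m' r) ?_ _ fun x h1 h2 => ?_
      · simp only [lq]
        split_ifs
        · exact Nat.zero_le n
        · exact le_trans (Nat.min_le_left _ _) (part_le_of_isMP hlam m r)
        · exact part_le_of_isMP hlam m' r
      · show ((1 ≤ x ∧ x ≤ lam m' r) ∧ (m < m' ∨ (m' = m ∧ x ≤ c))) ↔ x ≤ lq lam c m m' r
        simp only [lq]
        split_ifs with hq1 hq2
        · omega
        · subst hq2; omega
        · omega
    have e1 : ∑ k ∈ Finset.Icc 1 (l - m + 1), ∑ r ∈ Finset.Icc 1 n, leftPart lam c m k r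
        = ∑ m' ∈ Finset.Icc m l, ∑ r ∈ Finset.Icc 1 n, lq lam c m m' r := by
      refine Finset.sum_nbij' (fun k => k + m - 1) (fun m' => m' - m + 1) ?_ ?_ ?_ ?_ ?_
      · intro a ha; simp only [Finset.mem_Icc] at ha ⊢; omega
      · intro a ha; simp only [Finset.mem_Icc] at ha ⊢; omega
      · intro a ha; simp only [Finset.mem_Icc] at ha; omega
      · intro a ha; simp only [Finset.mem_Icc] at ha; omega
      · intro k hk
        simp only [Finset.mem_Icc] at hk
        refine Finset.sum_congr rfl fun r _ => ?_
        simp only [leftPart, lq]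
        by_cases hk1 : k = 1
        · subst hk1
          rw [if_neg one_ne_zero, if_pos rfl, if_neg (show ¬ (1 + m - 1 < m) by omega),
            if_pos (show 1 + m - 1 = m by omega)]
        · rw [if_neg (show ¬ k = 0 by omega), if_neg hk1,
            if_neg (show ¬ (k + m - 1 < m) by omega),
            if_neg (show ¬ (k + m - 1 = m) by omega),
            show m + k - 1 = k + m - 1 from by omega]
    have e2 : ∑ m' ∈ Finset.Icc m l, ∑ r ∈ Finset.Icc 1 n, lq lam c m m' r
        = ∑ m' ∈ Finset.Icc 1 l, ∑ r ∈ Finset.Icc 1 n, lq lam c m m' r := by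
      refine Finset.sum_subset (fun x hx => ?_) fun x hx hnx => ?_
      · simp only [Finset.mem_Icc] at hx ⊢; omega
      · simp only [Finset.mem_Icc] at hx hnx
        refine Finset.sum_eq_zero fun r _ => ?_
        simp only [lq, if_pos (show x < m by omega)]
    exact (e1.trans e2).symm
  have hnLn : nL ≤ n := by
    rw [← hDcard, ← hDLcard]
    exact Finset.card_le_card (Finset.monotone_filter_right box fun A _ hA => hA.1)
  have hTeq : box.filter (fun A => InDiag lam A ∧ t A ≤ nL)
      = box.filter (fun A => InDiag lam A ∧ (m < A.2.2 ∨ (A.2.2 = m ∧ A.2.1 ≤ c))) := by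
    apply Finset.eq_of_subset_of_card_le
    · exact Finset.monotone_filter_right box fun A _ hA => ⟨hA.1, hleft A hA.1 hA.2⟩
    · rw [hDLcard]
      have hs : Set.SurjOn t (box.filter fun A => InDiag lam A ∧ t A ≤ nL)
          (Finset.Icc 1 nL) := by
        intro i hi
        simp only [Finset.coe_Icc, Set.mem_Icc] at hi
        obtain ⟨A, hA, htA⟩ := htTab.2.2 i hi.1 (le_trans hi.2 hnLn)
        refine ⟨A, ?_, htA⟩
        simp only [Finset.coe_filter, Set.mem_setOf_eq]
        exact ⟨hmem A hA, hA, by omega⟩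
      have hc := Finset.card_le_card_of_surjOn t hs
      rw [Nat.card_Icc] at hc
      omega
  have hKey : ∀ r c' M, InDiag lam (r, c', M) →
      (t (r, c', M) ≤ nL ↔ (m < M ∨ (M = m ∧ c' ≤ c))) := by
    intro r c' M hA
    constructor
    · exact hleft (r, c', M) hA
    · intro hreg
      have hA' : ((r, c', M) : Node) ∈ box.filter (fun A => InDiag lam A ∧ t A ≤ nL) := by
        rw [hTeq]
        exact Finset.mem_filter.mpr ⟨hmem _ hA, hA, hreg⟩
      exact (Finset.mem_filter.mp hA').2.2
  -- structure of the left diagram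
  have hL1 : ∀ r c' k, InDiag (leftPart lam c m) (r, c', k) →
      1 ≤ k ∧ c' ≤ lam (k + m - 1) r ∧ 1 ≤ c' ∧ (k = 1 → c' ≤ c) := by
    intro r c' k h
    have h1 : 1 ≤ c' := h.1
    have h2 : c' ≤ leftPart lam c m k r := h.2
    simp only [leftPart] at h2
    split_ifs at h2 with hk0 hk1
    · omega
    · subst hk1
      refine ⟨le_refl 1, ?_, h1, fun _ => by omega⟩
      rw [show 1 + m - 1 = m from by omega]
      omega
    · refine ⟨by omega, ?_, h1, fun h => absurd h hk1⟩
      rw [show k + m - 1 = m + k - 1 from by omega]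
      exact h2
  -- structure of the right diagram
  have hR1 : ∀ r c' k, InDiag (rightPart lam c m) (r, c', k) →
      1 ≤ k ∧ k ≤ m ∧ 1 ≤ c' ∧ (k = m → c' + c ≤ lam m r) ∧ (k < m → c' ≤ lam k r) := by
    intro r c' k h
    have h1 : 1 ≤ c' := h.1
    have h2 : c' ≤ rightPart lam c m k r := h.2
    simp only [rightPart] at h2
    split_ifs at h2 with hk1 hk2
    · have hk0 : k ≠ 0 := by
        rintro rfl
        rw [hlam.1 0 r (Or.inl rfl)] at h2
        omega
      exact ⟨by omega, by omega, h1, fun h => absurd h (by omega), fun _ => h2⟩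
    · exact ⟨by omega, by omega, h1, fun _ => by omega, fun h => absurd h (by omega)⟩
    · omega
  refine ⟨fun A => t (A.1, A.2.1, A.2.2 + m - 1),
    fun A => (if A.2.2 = m then t (A.1, A.2.1 + c, m) else t A) - nL,
    ⟨?_, ?_, ?_⟩, ⟨?_, ?_⟩, ⟨?_, ?_, ?_⟩, ⟨?_, ?_⟩, ?_⟩
  -- tL bounds
  · rintro ⟨r, c', k⟩ hA
    obtain ⟨hk, hb, hc1, hk1⟩ := hL1 r c' k hA
    have hin : InDiag lam (r, c', k + m - 1) := ⟨hc1, hb⟩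
    exact ⟨(htb' r c' (k + m - 1) hin).1, (hKey r c' (k + m - 1) hin).2 (by omega)⟩
  -- tL injectivity
  · rintro ⟨r1, c1, k1⟩ ⟨r2, c2, k2⟩ hA hB heq
    obtain ⟨hk1, hb1, hc1, _⟩ := hL1 r1 c1 k1 hA
    obtain ⟨hk2, hb2, hc2, _⟩ := hL1 r2 c2 k2 hB
    have h := htinj' r1 c1 (k1 + m - 1) r2 c2 (k2 + m - 1) ⟨hc1, hb1⟩ ⟨hc2, hb2⟩ heq
    simp only [Prod.mk.injEq] at h ⊢
    obtain ⟨e1, e2, e3⟩ := h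
    exact ⟨e1, e2, by omega⟩
  -- tL surjectivity
  · intro i hi1 hi2
    obtain ⟨A, hA, htA⟩ := htTab.2.2 i hi1 (le_trans hi2 hnLn)
    obtain ⟨r, c', M⟩ := A
    have h1 : 1 ≤ c' := hA.1
    have h2 : c' ≤ lam M r := hA.2
    have hreg : m < M ∨ (M = m ∧ c' ≤ c) := (hKey r c' M hA).1 (by omega)
    have hMge : m ≤ M := by omega
    refine ⟨(r, c', M - m + 1), ⟨h1, ?_⟩, ?_⟩
    · show c' ≤ leftPart lam c m (M - m + 1) r
      by_cases hMm : M = m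
      · rw [hMm] at h2 hreg
        rw [hMm, show m - m + 1 = 1 from by omega]
        show c' ≤ min (lam m r) c
        rcases hreg with hr | hr <;> omega
      · have hMgt : m < M := by omega
        simp only [leftPart]
        rw [if_neg (show ¬ (M - m + 1 = 0) by omega), if_neg (show ¬ (M - m + 1 = 1) by omega),
          show m + (M - m + 1) - 1 = M from by omega]
        exact h2
    · show t (r, c', M - m + 1 + m - 1) = i
      rw [show M - m + 1 + m - 1 = M from by omega]
      exact htA
  -- tL row strict
  · intro r c' k hA hB
    obtain ⟨_, hb1, hc1, _⟩ := hL1 r c' k hA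
    obtain ⟨_, hb2, hc2, _⟩ := hL1 r (c' + 1) k hB
    exact htStd.1 r c' (k + m - 1) ⟨hc1, hb1⟩ ⟨hc2, hb2⟩
  -- tL col strict
  · intro r c' k hA hB
    obtain ⟨_, hb1, hc1, _⟩ := hL1 r c' k hA
    obtain ⟨_, hb2, hc2, _⟩ := hL1 (r + 1) c' k hB
    exact htStd.2 r c' (k + m - 1) ⟨hc1, hb1⟩ ⟨hc2, hb2⟩
  -- tR bounds
  · rintro ⟨r, c', k⟩ hA
    obtain ⟨ha1, ha2, ha3, ha4, ha5⟩ := hR1 r c' k hA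
    dsimp only
    by_cases hk : k = m
    · rw [if_pos hk]
      have hin : InDiag lam (r, c' + c, m) := ⟨show 1 ≤ c' + c by omega, ha4 hk⟩
      have hgt : ¬ t (r, c' + c, m) ≤ nL := by
        rw [hKey r (c' + c) m hin]
        omega
      have hub := (htb' r (c' + c) m hin).2
      omega
    · rw [if_neg hk]
      have hin : InDiag lam (r, c', k) := ⟨ha3, ha5 (by omega)⟩
      have hgt : ¬ t (r, c', k) ≤ nL := by
        rw [hKey r c' k hin]
        omega
      have hub := (htb' r c' k hin).2
      omega
  -- tR injectivity
  · rintro ⟨r1, c1, k1⟩ ⟨r2, c2, k2⟩ hA hB heq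
    obtain ⟨ha1, ha2, ha3, ha4, ha5⟩ := hR1 r1 c1 k1 hA
    obtain ⟨hb1, hb2, hb3, hb4, hb5⟩ := hR1 r2 c2 k2 hB
    dsimp only at heq
    by_cases h1 : k1 = m <;> by_cases h2 : k2 = m
    · rw [if_pos h1, if_pos h2] at heq
      have hin1 : InDiag lam (r1, c1 + c, m) := ⟨show 1 ≤ c1 + c by omega, ha4 h1⟩
      have hin2 : InDiag lam (r2, c2 + c, m) := ⟨show 1 ≤ c2 + c by omega, hb4 h2⟩
      have hg1 : ¬ t (r1, c1 + c, m) ≤ nL := by rw [hKey _ _ _ hin1]; omega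
      have hg2 : ¬ t (r2, c2 + c, m) ≤ nL := by rw [hKey _ _ _ hin2]; omega
      have hte : t (r1, c1 + c, m) = t (r2, c2 + c, m) := by omega
      have h := htinj' _ _ _ _ _ _ hin1 hin2 hte
      simp only [Prod.mk.injEq] at h ⊢
      omega
    · rw [if_pos h1, if_neg h2] at heq
      have hin1 : InDiag lam (r1, c1 + c, m) := ⟨show 1 ≤ c1 + c by omega, ha4 h1⟩
      have hin2 : InDiag lam (r2, c2, k2) := ⟨hb3, hb5 (by omega)⟩
      have hg1 : ¬ t (r1, c1 + c, m) ≤ nL := by rw [hKey _ _ _ hin1]; omega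
      have hg2 : ¬ t (r2, c2, k2) ≤ nL := by rw [hKey _ _ _ hin2]; omega
      have hte : t (r1, c1 + c, m) = t (r2, c2, k2) := by omega
      have h := htinj' _ _ _ _ _ _ hin1 hin2 hte
      simp only [Prod.mk.injEq] at h
      omega
    · rw [if_neg h1, if_pos h2] at heq
      have hin1 : InDiag lam (r1, c1, k1) := ⟨ha3, ha5 (by omega)⟩
      have hin2 : InDiag lam (r2, c2 + c, m) := ⟨show 1 ≤ c2 + c by omega, hb4 h2⟩
      have hg1 : ¬ t (r1, c1, k1) ≤ nL := by rw [hKey _ _ _ hin1]; omega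
      have hg2 : ¬ t (r2, c2 + c, m) ≤ nL := by rw [hKey _ _ _ hin2]; omega
      have hte : t (r1, c1, k1) = t (r2, c2 + c, m) := by omega
      have h := htinj' _ _ _ _ _ _ hin1 hin2 hte
      simp only [Prod.mk.injEq] at h
      omega
    · rw [if_neg h1, if_neg h2] at heq
      have hin1 : InDiag lam (r1, c1, k1) := ⟨ha3, ha5 (by omega)⟩
      have hin2 : InDiag lam (r2, c2, k2) := ⟨hb3, hb5 (by omega)⟩
      have hg1 : ¬ t (r1, c1, k1) ≤ nL := by rw [hKey _ _ _ hin1]; omega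
      have hg2 : ¬ t (r2, c2, k2) ≤ nL := by rw [hKey _ _ _ hin2]; omega
      have hte : t (r1, c1, k1) = t (r2, c2, k2) := by omega
      have h := htinj' _ _ _ _ _ _ hin1 hin2 hte
      simp only [Prod.mk.injEq] at h ⊢
      omega
  -- tR surjectivity
  · intro i hi1 hi2
    obtain ⟨B, hB, htB⟩ := htTab.2.2 (nL + i) (by omega) (by omega)
    obtain ⟨r, c', M⟩ := B
    have h1 : 1 ≤ c' := hB.1
    have h2 : c' ≤ lam M r := hB.2
    have hnotreg : ¬ (m < M ∨ (M = m ∧ c' ≤ c)) := fun hreg =>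
      absurd ((hKey r c' M hB).mpr hreg) (by omega)
    by_cases hM : M = m
    · rw [hM] at h2 hB htB
      have hcc : c < c' := by omega
      refine ⟨(r, c' - c, m), ⟨show 1 ≤ c' - c by omega, ?_⟩, ?_⟩
      · show c' - c ≤ rightPart lam c m m r
        have hrp : rightPart lam c m m r = lam m r - c := by
          unfold rightPart
          rw [if_neg (lt_irrefl m), if_pos rfl]
        rw [hrp]
        omega
      · dsimp only
        rw [if_pos rfl, show c' - c + c = c' from by omega, htB]
        omega
    · have hMlt : M < m := by omega
      refine ⟨(r, c', M), ⟨h1, ?_⟩, ?_⟩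
      · show c' ≤ rightPart lam c m M r
        simp only [rightPart, if_pos hMlt]
        exact h2
      · dsimp only
        rw [if_neg hM, htB]
        omega
  -- tR row strict
  · intro r c' k hA hB
    obtain ⟨ha1, ha2, ha3, ha4, ha5⟩ := hR1 r c' k hA
    obtain ⟨hb1, hb2, hb3, hb4, hb5⟩ := hR1 r (c' + 1) k hB
    dsimp only
    by_cases hk : k = m
    · rw [if_pos hk, if_pos hk]
      have hin1 : InDiag lam (r, c' + c, m) := ⟨show 1 ≤ c' + c by omega, ha4 hk⟩
      have hin2 : InDiag lam (r, c' + c + 1, m) := ⟨show 1 ≤ c' + c + 1 by omega,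
        show c' + c + 1 ≤ lam m r by have := hb4 hk; omega⟩
      have hlt := htStd.1 r (c' + c) m hin1 hin2
      have hg1 : ¬ t (r, c' + c, m) ≤ nL := by rw [hKey _ _ _ hin1]; omega
      rw [show c' + 1 + c = c' + c + 1 from by omega]
      omega
    · rw [if_neg hk, if_neg hk]
      have hin1 : InDiag lam (r, c', k) := ⟨ha3, ha5 (by omega)⟩
      have hin2 : InDiag lam (r, c' + 1, k) := ⟨show 1 ≤ c' + 1 by omega, hb5 (by omega)⟩
      have hlt := htStd.1 r c' k hin1 hin2
      have hg1 : ¬ t (r, c', k) ≤ nL := by rw [hKey _ _ _ hin1]; omega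
      omega
  -- tR col strict
  · intro r c' k hA hB
    obtain ⟨ha1, ha2, ha3, ha4, ha5⟩ := hR1 r c' k hA
    obtain ⟨hb1, hb2, hb3, hb4, hb5⟩ := hR1 (r + 1) c' k hB
    dsimp only
    by_cases hk : k = m
    · rw [if_pos hk, if_pos hk]
      have hin1 : InDiag lam (r, c' + c, m) := ⟨show 1 ≤ c' + c by omega, ha4 hk⟩
      have hin2 : InDiag lam (r + 1, c' + c, m) := ⟨show 1 ≤ c' + c by omega, hb4 hk⟩
      have hlt := htStd.2 r (c' + c) m hin1 hin2
      have hg1 : ¬ t (r, c' + c, m) ≤ nL := by rw [hKey _ _ _ hin1]; omega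
      omega
    · rw [if_neg hk, if_neg hk]
      have hin1 : InDiag lam (r, c', k) := ⟨ha3, ha5 (by omega)⟩
      have hin2 : InDiag lam (r + 1, c', k) := ⟨show 1 ≤ c' by omega, hb5 (by omega)⟩
      have hlt := htStd.2 r c' k hin1 hin2
      have hg1 : ¬ t (r, c', k) ≤ nL := by rw [hKey _ _ _ hin1]; omega
      omega
  -- glue equation
  · rintro ⟨r, c', M⟩ hA
    have h1 : 1 ≤ c' := hA.1
    have h2 : c' ≤ lam M r := hA.2
    simp only [glueLR]
    rcases Nat.lt_trichotomy M m with hM | hM | hM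
    · rw [if_pos hM, if_neg (show ¬ M = m by omega)]
      have hgt : ¬ t (r, c', M) ≤ nL := by
        rw [hKey r c' M hA]
        omega
      omega
    · rw [hM] at hA ⊢
      rw [if_neg (lt_irrefl m), if_pos rfl]
      by_cases hc' : c' ≤ c
      · rw [if_pos hc', show 1 + m - 1 = m from by omega]
      · rw [if_neg hc', if_true, show c' - c + c = c' from by omega]
        have hgt : ¬ t (r, c', m) ≤ nL := by
          rw [hKey r c' m hA]
          omega
        omega
    · rw [if_neg (show ¬ M < m by omega), if_neg (show ¬ M = m by omega),
        show M - m + 1 + m - 1 = M from by omega]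


end FS
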